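/- Let D = 𝔽₂(t) be the field of rational functions over 𝔽₂ (RatFunc (ZMod 2), t = RatFunc.X), let A, B ∈ D, and let f, g : D → D be additive maps with f(1) = A, f(t) = B, satisfying f(x) + x^2 * g(x⁻¹) = 0 for every nonzero x ∈ D. Then for every polynomial P over 𝔽₂ and every integer p, writing P(t²) for the image in D of P evaluated at t², one has f(P(t²) * t^(2p)) = P(t²) * t^(2p) * A and f(P(t²) * t^(2p+1)) = P(t²) * t^(2p) * B (here t^(n) for n ∈ ℤ denotes the integer power zpow in the field D). In particular, f(t^(2n)) = t^(2n) * A and f(t^(2n+1)) = t^(2n) * B for all n ∈ ℤ. -/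

import Mathlib

open Polynomial

theorem stmt12 (A B : RatFunc (ZMod 2))
    (f g : RatFunc (ZMod 2) → RatFunc (ZMod 2))
    (hf : ∀ x y : RatFunc (ZMod 2), f (x + y) = f x + f y)
    (hg : ∀ x y : RatFunc (ZMod 2), g (x + y) = g x + g y)
    (hf1 : f 1 = A) (hft : f RatFunc.X = B)
    (hid : ∀ x : RatFunc (ZMod 2), x ≠ 0 → f x + x ^ 2 * g x⁻¹ = 0) :
    (∀ (P : (ZMod 2)[X]) (p : ℤ),
      f (algebraMap ((ZMod 2)[X]) (RatFunc (ZMod 2)) (P.comp (X ^ 2)) *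
          RatFunc.X ^ (2 * p)) =
        algebraMap ((ZMod 2)[X]) (RatFunc (ZMod 2)) (P.comp (X ^ 2)) *
          RatFunc.X ^ (2 * p) * A ∧
      f (algebraMap ((ZMod 2)[X]) (RatFunc (ZMod 2)) (P.comp (X ^ 2)) *
          RatFunc.X ^ (2 * p + 1)) =
        algebraMap ((ZMod 2)[X]) (RatFunc (ZMod 2)) (P.comp (X ^ 2)) *
          RatFunc.X ^ (2 * p) * B) ∧
    (∀ n : ℤ,
      f (RatFunc.X ^ (2 * n)) = RatFunc.X ^ (2 * n) * A ∧
      f (RatFunc.X ^ (2 * n + 1)) = RatFunc.X ^ (2 * n) * B) := by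
  haveI : CharP (RatFunc (ZMod 2)) 2 := charP_of_injective_algebraMap' (ZMod 2) 2
  have htwo : (2 : RatFunc (ZMod 2)) = 0 := CharTwo.two_eq_zero
  have f0 : f 0 = 0 := by have := hf 0 0; simpa using this
  -- the harmonic identity
  have hI : ∀ x y : RatFunc (ZMod 2), x ≠ 0 → y ≠ 0 → x + y ≠ 0 →
      (x + y)^2 * f (x*y/(x+y)) = y^2 * f x + x^2 * f y := by
    intro x y hx hy hxy
    have hz : x*y/(x+y) ≠ 0 := div_ne_zero (mul_ne_zero hx hy) hxy
    have h1 := hid x hx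
    have h2 := hid y hy
    have h3 := hid _ hz
    have hinv : (x*y/(x+y))⁻¹ = x⁻¹ + y⁻¹ := by
      field_simp
      ring
    rw [hinv] at h3
    have h4 := hg x⁻¹ y⁻¹
    rw [h4] at h3
    have e1 : x^2 * g x⁻¹ = f x := by linear_combination h1 - f x * htwo
    have e2 : y^2 * g y⁻¹ = f y := by linear_combination h2 - f y * htwo
    have e3 : (x+y)^2 * f (x*y/(x+y)) = (x*y)^2 * (g x⁻¹ + g y⁻¹) := by
      have h5 : (x*y/(x+y)) * (x+y) = x*y := div_mul_cancel₀ _ hxy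
      linear_combination (x+y)^2 * h3 - ((x*y/(x+y))*(x+y) + x*y) * (g x⁻¹ + g y⁻¹) * h5
        - x^2*y^2*(g x⁻¹ + g y⁻¹) * htwo
    rw [e3]
    linear_combination y^2 * e1 + x^2 * e2
  -- squares move through f as fourth powers
  have L1 : ∀ w y : RatFunc (ZMod 2), w ≠ 0 → y ≠ 0 →
      f (w^2 * y) = w^4 * f (y / w^2) := by
    intro w y hw hy
    by_cases hw1 : w = 1
    · subst hw1; simp
    have hw1' : (1 + w : RatFunc (ZMod 2)) ≠ 0 := by
      intro h
      apply hw1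
      linear_combination h - htwo
    have hsum : ((1+w)^2 * y / w^2 : RatFunc (ZMod 2)) + y = y / w^2 := by
      field_simp
      linear_combination (w + w^2) * htwo
    have hxdecomp : ((1+w)^2 * y / w^2 : RatFunc (ZMod 2)) = y/w^2 + y := by
      field_simp
      linear_combination w * htwo
    have harg : ((1+w)^2 * y / w^2) * y / (((1+w)^2 * y / w^2) + y) = y + w^2*y := by
      rw [hsum]
      field_simp
      linear_combination w * htwo
    have hfx : f ((1+w)^2 * y / w^2) = f (y/w^2) + f y := by
      rw [hxdecomp, hf]
    have hx : ((1+w)^2 * y / w^2 : RatFunc (ZMod 2)) ≠ 0 :=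
      div_ne_zero (mul_ne_zero (pow_ne_zero _ hw1') hy) (pow_ne_zero _ hw)
    have hxy : ((1+w)^2 * y / w^2 : RatFunc (ZMod 2)) + y ≠ 0 := by
      rw [hsum]; exact div_ne_zero hy (pow_ne_zero _ hw)
    have E := hI ((1+w)^2 * y / w^2) y hx hy hxy
    rw [harg, hf y (w^2*y), hsum, hfx] at E
    field_simp at E
    rw [mul_comm y (w^2)] at E
    have key : y^2 * f (w^2*y) = y^2 * (w^4 * f (y/w^2)) := by
      linear_combination y^2 * E + (y^2 * f y * (2*w + 3*w^2 + 2*w^3 + w^4)) * htwo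
    exact mul_left_cancel₀ (pow_ne_zero 2 hy) key
  have L2 : ∀ u z : RatFunc (ZMod 2), u ≠ 0 → f (u^4 * z) = u^4 * f z := by
    intro u z hu
    by_cases hz : z = 0
    · subst hz; simp [f0]
    have h := L1 u (u^2*z) hu (mul_ne_zero (pow_ne_zero _ hu) hz)
    rw [show u^2*(u^2*z) = u^4*z from by ring,
      mul_div_cancel_left₀ _ (pow_ne_zero 2 hu)] at h
    exact h
  set t : RatFunc (ZMod 2) := RatFunc.X with ht_def
  have ht : t ≠ 0 := RatFunc.X_ne_zero
  have h1t : (1 + t) ≠ 0 := by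
    have h : (1 + X : (ZMod 2)[X]) ≠ 0 := by
      intro h
      have := congrArg (Polynomial.coeff · 0) h
      simp at this
    have := RatFunc.algebraMap_ne_zero (K := ZMod 2) h
    rwa [map_add, map_one, RatFunc.algebraMap_X] at this
  have h1tt : (1 + t + t^2) ≠ 0 := by
    have h : (1 + X + X^2 : (ZMod 2)[X]) ≠ 0 := by
      intro h
      have := congrArg (Polynomial.coeff · 0) h
      simp at this
    have := RatFunc.algebraMap_ne_zero (K := ZMod 2) h
    rwa [map_add, map_add, map_one, map_pow, RatFunc.algebraMap_X] at this
  -- value chain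
  have E1 := hI 1 t one_ne_zero ht h1t
  rw [one_mul, hf1, hft] at E1
  have v1 : (1 + t)^2 * f (t/(1+t)) = t^2*A + B := by linear_combination E1
  have hdec : (1:RatFunc (ZMod 2))/(1+t) = 1 + t/(1+t) := by
    field_simp
    linear_combination (-t) * htwo
  have c2 : f (1/(1+t)) = A + f (t/(1+t)) := by rw [hdec, hf, hf1]
  have v2 : (1 + t)^2 * f (1/(1+t)) = A + B := by
    rw [c2]
    linear_combination v1 + (t*A + t^2*A) * htwo
  have hx3 : (1:RatFunc (ZMod 2))/(1+t) ≠ 0 := div_ne_zero one_ne_zero h1t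
  have hs3 : (1:RatFunc (ZMod 2))/(1+t) + t = (1+t+t^2)/(1+t) := by
    field_simp
    ring
  have hxy3 : (1:RatFunc (ZMod 2))/(1+t) + t ≠ 0 := by
    rw [hs3]; exact div_ne_zero h1tt h1t
  have E3 := hI (1/(1+t)) t hx3 ht hxy3
  have harg3 : (1/(1+t)) * t / ((1/(1+t)) + t) = t/(1+t+t^2) := by
    rw [hs3]
    field_simp
  rw [harg3, hs3, hft] at E3
  have v3 : (1+t+t^2)^2 * f (t/(1+t+t^2)) = t^2*A + t^2*B + B := by
    field_simp at E3
    linear_combination E3 + t^2 * v2 + (0:RatFunc (ZMod 2)) * htwo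
  have e4 := L2 (1+t) (t/(1+t)) h1t
  have hargIV : (1+t)^4 * (t/(1+t)) = t + t^2 + t^3 + t^4 := by
    field_simp
    linear_combination (t + t^2) * htwo
  rw [hargIV, hf (t+t^2+t^3) (t^4), hf (t+t^2) (t^3), hf t (t^2), hft] at e4
  have e5 := L2 t 1 ht
  rw [mul_one, hf1] at e5
  have v4 : f (t^2) + f (t^3) = t^2*A + t^2*B := by
    linear_combination e4 + (1+t)^2 * v1 + e5 + (t*B + t^3*A + t^4*A - f (t^4)) * htwo
  have e6 := L2 (1+t+t^2) (t/(1+t+t^2)) h1tt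
  have hargV : (1+t+t^2)^4 * (t/(1+t+t^2)) = t + t^2 + t^4 + t^6 + t^7 := by
    field_simp
    linear_combination (t+3*t^2+3*t^3+3*t^4+t^5) * htwo
  rw [hargV, hf (t+t^2+t^4+t^6) (t^7), hf (t+t^2+t^4) (t^6), hf (t+t^2) (t^4),
    hf t (t^2), hft] at e6
  have e7 := L2 t (t^2) ht
  rw [show t^4 * t^2 = t^6 from by ring] at e7
  have e8 := L2 t (t^3) ht
  rw [show t^4 * t^3 = t^7 from by ring] at e8
  have ft2 : f (t^2) = t^2 * A := by
    linear_combination e6 + (1+t+t^2)^2 * v3 + e5 + e7 + e8 + t^4 * v4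
      + (t*B + 2*t^2*B + t^3*A + 2*t^3*B + 2*t^4*A + 2*t^4*B + t^5*A + t^5*B + t^6*A + t^6*B - f (t^4) - f (t^6) - f (t^7)) * htwo
  have ft3 : f (t^3) = t^2 * B := by
    linear_combination v4 + ft2 + (t^2*A - f (t^2)) * htwo
  -- integer powers
  have keyE : ∀ n : ℤ, f (t ^ (2*n)) = t ^ (2*n) * A ∧ f (t ^ (2*n+1)) = t ^ (2*n) * B := by
    intro n
    have hu : ∀ m : ℤ, (t : RatFunc (ZMod 2)) ^ m ≠ 0 := fun m => zpow_ne_zero _ ht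
    have h4 : ∀ m : ℤ, ((t^m)^(4:ℕ) : RatFunc (ZMod 2)) = t ^ (4*m) := by
      intro m
      rw [← zpow_natCast (t^m) 4, ← zpow_mul]
      ring_nf
    rcases Int.even_or_odd n with ⟨m, hm⟩ | ⟨m, hm⟩
    · constructor
      · have h := L2 (t^m) 1 (hu m)
        rw [mul_one, hf1, h4] at h
        rw [show (2*n : ℤ) = 4*m from by omega]
        exact h
      · have h := L2 (t^m) t (hu m)
        rw [hft, h4] at h
        rw [show (2*n+1 : ℤ) = 4*m+1 from by omega, show (2*n : ℤ) = 4*m from by omega,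
          zpow_add_one₀ ht]
        exact h
    · constructor
      · have h := L2 (t^m) (t^2) (hu m)
        rw [ft2, h4] at h
        have hc : (t : RatFunc (ZMod 2)) ^ (2*n) = t^(4*m) * t^2 := by
          rw [show (2*n : ℤ) = 4*m + ((2:ℕ):ℤ) from by push_cast; omega, zpow_add₀ ht,
            zpow_natCast]
        rw [hc]
        linear_combination h
      · have h := L2 (t^m) (t^3) (hu m)
        rw [ft3, h4] at h
        have hc : (t : RatFunc (ZMod 2)) ^ (2*n+1) = t^(4*m) * t^3 := by
          rw [show (2*n+1 : ℤ) = 4*m + ((3:ℕ):ℤ) from by push_cast; omega, zpow_add₀ ht,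
            zpow_natCast]
        have hc2 : (t : RatFunc (ZMod 2)) ^ (2*n) = t^(4*m) * t^2 := by
          rw [show (2*n : ℤ) = 4*m + ((2:ℕ):ℤ) from by push_cast; omega, zpow_add₀ ht,
            zpow_natCast]
        rw [hc, hc2]
        linear_combination h
  refine ⟨?_, keyE⟩
  intro P
  induction P using Polynomial.induction_on' with
  | add p q hp hq =>
    intro k
    obtain ⟨hp1, hp2⟩ := hp k
    obtain ⟨hq1, hq2⟩ := hq k
    constructor
    · rw [add_comp, map_add, add_mul, hf, hp1, hq1]; ring
    · rw [add_comp, map_add, add_mul, hf, hp2, hq2]; ring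
  | monomial n a =>
    intro k
    have ha : a = 0 ∨ a = 1 := by
      fin_cases a
      · exact Or.inl rfl
      · exact Or.inr rfl
    rcases ha with rfl | rfl
    · simp [f0]
    · rw [← Polynomial.X_pow_eq_monomial, Polynomial.X_pow_comp, map_pow, map_pow,
        RatFunc.algebraMap_X]
      have hc1 : ((t^2)^n * t^(2*k) : RatFunc (ZMod 2)) = t^(2*((n:ℤ)+k)) := by
        rw [← pow_mul, ← zpow_natCast t (2*n), ← zpow_add₀ ht]
        congr 1
        push_cast
        ring
      have hc2 : ((t^2)^n * t^(2*k+1) : RatFunc (ZMod 2)) = t^(2*((n:ℤ)+k)+1) := by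
        rw [← pow_mul, ← zpow_natCast t (2*n), ← zpow_add₀ ht]
        congr 1
        push_cast
        ring
      constructor
      · rw [hc1]
        exact (keyE ((n:ℤ)+k)).1
      · rw [hc2, hc1]
        exact (keyE ((n:ℤ)+k)).2
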